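/- arXiv:2603.23193 — 2 statements merged into one kernel-verified Lean document; each statement's English description precedes it below -/
import Mathlib

section
/- Let T be a ditree and let S be a source set or a sink set of T of size at least 2 that contains no leaf of T. Suppose M is a minimum geodetic set of T that contains exactly one vertex of S. Then the set N obtained from M by replacing the unique vertex of M ∩ S by any other vertex of S is also a minimum geodetic set of T. -/
namespace GeoPaper

variable {V : Type*}

/-- A directed walk from `u` to `v` in the digraph with arc relation `D`,
represented by the list of its vertices. -/
def IsWalk (D : V → V → Prop) (u v : V) (p : List V) : Prop :=
  p.Chain' D ∧ p.head? = some u ∧ p.getLast? = some v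

/-- `interval D u v` is the set of vertices lying on some shortest directed
path from `u` to `v` (i.e. a directed walk of minimum length from `u` to `v`). -/
def interval (D : V → V → Prop) (u v : V) : Set V :=
  {x | ∃ p, IsWalk D u v p ∧ (∀ q, IsWalk D u v q → p.length ≤ q.length) ∧ x ∈ p}

/-- `S` is a geodetic set of the digraph `D`: every vertex lies on a shortest
directed path between two vertices of `S`. -/
def IsGeodetic (D : V → V → Prop) (S : Set V) : Prop :=
  ∀ x, ∃ u ∈ S, ∃ v ∈ S, x ∈ interval D u v

/-- `S` is a geodetic set of minimum cardinality. -/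
def IsMinGeodetic (D : V → V → Prop) (S : Set V) : Prop :=
  IsGeodetic D S ∧ ∀ T : Set V, IsGeodetic D T → S.ncard ≤ T.ncard

/-- a source: no incoming arcs. -/
def IsSource (D : V → V → Prop) (v : V) : Prop := ∀ u, ¬ D u v

/-- a sink: no outgoing arcs. -/
def IsSink (D : V → V → Prop) (v : V) : Prop := ∀ u, ¬ D v u

/-- an extremal vertex: a source or a sink. -/
def Extremal (D : V → V → Prop) (v : V) : Prop := IsSource D v ∨ IsSink D v

/-- the digraph `D` has no directed 2-cycle (an oriented graph). -/
def NoTwoCycle (D : V → V → Prop) : Prop := ∀ u v, D u v → ¬ D v u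

/-- the underlying undirected simple graph of a digraph. -/
def underlying (D : V → V → Prop) : SimpleGraph V where
  Adj u v := u ≠ v ∧ (D u v ∨ D v u)
  symm := ⟨fun u v h => ⟨h.1.symm, h.2.symm⟩⟩
  loopless := ⟨fun v h => h.1 rfl⟩

/-- a leaf: a vertex of degree 1 in the underlying undirected graph. -/
def IsLeaf (D : V → V → Prop) (v : V) : Prop := ((underlying D).neighborSet v).ncard = 1

/-- a ditree: a digraph whose underlying undirected graph is a tree. -/
def IsDitree (D : V → V → Prop) : Prop := (∀ v, ¬ D v v) ∧ (underlying D).IsTree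

/-- reachability by directed paths. -/
def Reach (D : V → V → Prop) : V → V → Prop := Relation.ReflTransGen D

/-- `S` is a maximal strongly connected component of `D`. -/
def IsSCC (D : V → V → Prop) (S : Set V) : Prop :=
  S.Nonempty ∧ (∀ u ∈ S, ∀ v ∈ S, Reach D u v) ∧
    ∀ T : Set V, S ⊆ T → (∀ u ∈ T, ∀ v ∈ T, Reach D u v) → T ⊆ S

/-- a source set: a maximal strongly connected component no arc enters from outside. -/
def IsSourceSet (D : V → V → Prop) (S : Set V) : Prop :=
  IsSCC D S ∧ ∀ u v, v ∈ S → D u v → u ∈ S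

/-- a sink set: a maximal strongly connected component no arc leaves. -/
def IsSinkSet (D : V → V → Prop) (S : Set V) : Prop :=
  IsSCC D S ∧ ∀ u v, u ∈ S → D u v → v ∈ S

/-- a transitive vertex. -/
def IsTransitiveVertex (D : V → V → Prop) (v : V) : Prop :=
  ∀ u1 u2, D u1 v → D v u2 → D u1 u2 ∨ u1 = u2



section Walks

variable {D : V → V → Prop} {u v a : V} {p q : List V}

lemma walk_ne_nil (h : IsWalk D u v p) : p ≠ [] := by
  rintro rfl; simp [IsWalk] at h

lemma isWalk_single (u : V) : IsWalk D u u [u] := ⟨List.isChain_singleton u, rfl, rfl⟩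

lemma IsWalk.tail_arc (h : IsWalk D u v p) (hw : D v a) : IsWalk D u a (p ++ [a]) := by
  obtain ⟨hc, hh, hl⟩ := h
  refine ⟨List.isChain_append.2 ⟨hc, List.isChain_singleton a, ?_⟩, ?_, by simp⟩
  · intro x hx y hy; simp at hy; subst hy; rw [hl] at hx; simp at hx; subst hx; exact hw
  · cases p with
    | nil => simp at hh
    | cons b t => simpa using hh

lemma reach_last_of_chain' : ∀ (p : List V) (a : V), p.Chain' D → a ∈ p → p.getLast? = some v →
    Relation.ReflTransGen D a v := by
  intro p
  induction p with
  | nil => simp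
  | cons b t ih =>
    intro a hc ha hl
    cases t with
    | nil =>
      simp at ha hl; subst ha; subst hl; exact Relation.ReflTransGen.refl
    | cons c t' =>
      have hbc : D b c := (List.isChain_cons_cons.1 hc).1
      have hc' : (c :: t').Chain' D := (List.isChain_cons_cons.1 hc).2
      have hl' : (c :: t').getLast? = some v := by simpa [List.getLast?] using hl
      rcases List.mem_cons.1 ha with rfl | ha'
      · exact Relation.ReflTransGen.head hbc (ih c hc' (by simp) hl')
      · exact ih a hc' ha' hl'

lemma reach_mem_of_head : ∀ (p : List V) (a u : V), p.Chain' D → a ∈ p → p.head? = some u →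
    Relation.ReflTransGen D u a := by
  intro p
  induction p with
  | nil => simp
  | cons b t ih =>
    intro a u hc ha hh
    simp at hh; subst hh
    rcases List.mem_cons.1 ha with rfl | ha'
    · exact Relation.ReflTransGen.refl
    · cases t with
      | nil => simp at ha'
      | cons c t' =>
        exact Relation.ReflTransGen.head (List.isChain_cons_cons.1 hc).1
          (ih a c (List.isChain_cons_cons.1 hc).2 ha' rfl)

lemma IsWalk.mem_reach_last (h : IsWalk D u v p) (ha : a ∈ p) : Relation.ReflTransGen D a v :=
  reach_last_of_chain' p a h.1 ha h.2.2

lemma IsWalk.mem_reach_head (h : IsWalk D u v p) (ha : a ∈ p) : Relation.ReflTransGen D u a :=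
  reach_mem_of_head p a u h.1 ha h.2.1

lemma IsWalk.head_mem (h : IsWalk D u v p) : u ∈ p := by
  cases p with
  | nil => exact absurd rfl (walk_ne_nil h)
  | cons b t => have := h.2.1; simp at this; subst this; simp

lemma IsWalk.last_mem (h : IsWalk D u v p) : v ∈ p := by
  have := h.2.2
  cases p with
  | nil => simp at this
  | cons b t =>
    rw [List.getLast?_eq_getLast (l := b :: t) (by simp)] at this
    simp at this; rw [← this]; exact List.getLast_mem _

lemma IsWalk.reach (h : IsWalk D u v p) : Relation.ReflTransGen D u v :=
  h.mem_reach_last h.head_mem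

lemma reach_iff_walk : Relation.ReflTransGen D u v ↔ ∃ p, IsWalk D u v p := by
  constructor
  · intro h
    induction h with
    | refl => exact ⟨[u], isWalk_single u⟩
    | tail _ hbc ih => obtain ⟨p, hp⟩ := ih; exact ⟨p ++ [_], hp.tail_arc hbc⟩
  · rintro ⟨p, hp⟩; exact hp.reach

lemma exists_nodup_walk_aux : ∀ n (p : List V) (u : V), p.length ≤ n → IsWalk D u v p →
    ∃ q, IsWalk D u v q ∧ q.Nodup ∧ (∀ b ∈ q, b ∈ p) ∧ q.length ≤ p.length ∧
      (¬ p.Nodup → q.length < p.length) := by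
  intro n
  induction n with
  | zero =>
    intro p u hp hw
    exact absurd (List.eq_nil_of_length_eq_zero (Nat.le_zero.1 hp)) (walk_ne_nil hw)
  | succ n ih =>
    intro p u hp hw
    cases p with
    | nil => exact absurd rfl (walk_ne_nil hw)
    | cons b t =>
      have hb : b = u := by have := hw.2.1; simpa using this
      subst hb
      by_cases hmem : b ∈ t
      · obtain ⟨t1, t2, rfl⟩ := List.append_of_mem hmem
        have hsuf : (b :: t2) <:+ (b :: (t1 ++ b :: t2)) := ⟨b :: t1, by simp⟩
        have hw' : IsWalk D b v (b :: t2) := by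
          refine ⟨hw.1.suffix hsuf, rfl, ?_⟩
          have := hw.2.2
          rw [show (b :: (t1 ++ b :: t2)) = (b :: t1) ++ (b :: t2) by simp] at this
          rw [List.getLast?_append] at this
          simpa using this
        obtain ⟨q, hq, hnd, hsub, hle, _⟩ := ih (b :: t2) b (by simp at hp ⊢; omega) hw'
        have hlen : (b :: t2).length < (b :: (t1 ++ b :: t2)).length := by simp
        exact ⟨q, hq, hnd, fun c hc => hsuf.sublist.mem (hsub c hc), by omega, fun _ => by omega⟩
      · cases t with
        | nil =>
          exact ⟨[b], hw, by simp, by simp, le_refl _, by simp⟩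
        | cons c t' =>
          have hw' : IsWalk D c v (c :: t') :=
            ⟨(List.isChain_cons_cons.1 hw.1).2, rfl, by have := hw.2.2; simpa [List.getLast?] using this⟩
          obtain ⟨q, hq, hnd, hsub, hle, hlt⟩ := ih (c :: t') c (by simp at hp ⊢; omega) hw'
          have hcq : q.head? = some c := hq.2.1
          refine ⟨b :: q, ⟨?_, rfl, ?_⟩, ?_, ?_, ?_, ?_⟩
          · refine List.isChain_cons.2 ?_
            refine ⟨fun y hy => ?_, hq.1⟩
            rw [hcq] at hy; simp at hy; subst hy
            exact (List.isChain_cons_cons.1 hw.1).1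
          · cases q with
            | nil => exact absurd rfl (walk_ne_nil hq)
            | cons d q' => simpa [List.getLast?] using hq.2.2
          · exact List.nodup_cons.2 ⟨fun hu => hmem (hsub b hu), hnd⟩
          · intro e he; rcases List.mem_cons.1 he with rfl | he'
            · simp
            · simp [hsub e he']
          · simpa using hle
          · intro hnodup
            have : ¬ (c :: t').Nodup ∨ b ∈ (c :: t') := by
              by_contra hcon; push_neg at hcon
              exact hnodup (List.nodup_cons.2 ⟨hcon.2, hcon.1⟩)
            rcases this with h1 | h1
            · have := hlt h1; simp at this ⊢; omega
            · exact absurd h1 hmem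

lemma IsWalk.exists_nodup (hw : IsWalk D u v p) :
    ∃ q, IsWalk D u v q ∧ q.Nodup ∧ (∀ b ∈ q, b ∈ p) ∧ q.length ≤ p.length ∧
      (¬ p.Nodup → q.length < p.length) :=
  exists_nodup_walk_aux p.length p u (le_refl _) hw

lemma reach_nodup_walk (h : Relation.ReflTransGen D u v) :
    ∃ p, IsWalk D u v p ∧ p.Nodup := by
  obtain ⟨p, hp⟩ := reach_iff_walk.1 h
  obtain ⟨q, hq, hnd, -⟩ := hp.exists_nodup
  exact ⟨q, hq, hnd⟩

end Walks

section Ditree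

variable {D : V → V → Prop} {u v a : V} {p q : List V}

lemma adj_of_arc (hD : ∀ w, ¬ D w w) (h : D u v) : (underlying D).Adj u v :=
  ⟨fun he => hD u (he ▸ h), Or.inl h⟩

lemma exists_underlying_walk (hD : ∀ w, ¬ D w w) :
    ∀ (p : List V) (u v : V), IsWalk D u v p →
      ∃ w : (underlying D).Walk u v, w.support = p := by
  intro p
  induction p with
  | nil => intro u v hw; exact absurd rfl (walk_ne_nil hw)
  | cons b t ih =>
    intro u v hw
    have hb : b = u := by have := hw.2.1; simpa using this
    subst hb
    cases t with
    | nil =>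
      have : b = v := by have := hw.2.2; simpa using this
      subst this
      exact ⟨SimpleGraph.Walk.nil, by simp⟩
    | cons c t' =>
      have harc : D b c := (List.isChain_cons_cons.1 hw.1).1
      have hw' : IsWalk D c v (c :: t') :=
        ⟨(List.isChain_cons_cons.1 hw.1).2, rfl, by have := hw.2.2; simpa [List.getLast?] using this⟩
      obtain ⟨w, hwsup⟩ := ih c v hw'
      exact ⟨SimpleGraph.Walk.cons (adj_of_arc hD harc) w, by simp [hwsup]⟩

lemma nodup_walk_unique (hT : IsDitree D) (hp : IsWalk D u v p) (hpn : p.Nodup)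
    (hq : IsWalk D u v q) (hqn : q.Nodup) : p = q := by
  obtain ⟨wp, hwp⟩ := exists_underlying_walk hT.1 p u v hp
  obtain ⟨wq, hwq⟩ := exists_underlying_walk hT.1 q u v hq
  have hip : wp.IsPath := (SimpleGraph.Walk.isPath_def wp).2 (hwp ▸ hpn)
  have hiq : wq.IsPath := (SimpleGraph.Walk.isPath_def wq).2 (hwq ▸ hqn)
  have h2 := hT.2.2.path_unique ⟨wp, hip⟩ ⟨wq, hiq⟩
  have h3 : wp = wq := congrArg Subtype.val h2
  rw [← hwp, ← hwq, h3]

lemma mem_interval_iff (hT : IsDitree D) :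
    a ∈ interval D u v ↔ ∃ p, IsWalk D u v p ∧ p.Nodup ∧ a ∈ p := by
  constructor
  · rintro ⟨p, hw, hmin, hap⟩
    refine ⟨p, hw, ?_, hap⟩
    by_contra hnd
    obtain ⟨q, hq, -, -, -, hlt⟩ := hw.exists_nodup
    exact absurd (hmin q hq) (by have := hlt hnd; omega)
  · rintro ⟨p, hw, hnd, hap⟩
    refine ⟨p, hw, ?_, hap⟩
    intro q hq
    obtain ⟨q', hq', hq'nd, -, hle, -⟩ := hq.exists_nodup
    have heq : p = q' := nodup_walk_unique hT hw hnd hq' hq'nd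
    rw [heq]; omega

end Ditree


section Source

variable {T : V → V → Prop} {S : Set V} {u v a x y : V} {p q : List V}

lemma mem_S_of_reach_mem (hS : IsSourceSet T S) (h : Relation.ReflTransGen T a v)
    (hv : v ∈ S) : a ∈ S := by
  induction h using Relation.ReflTransGen.head_induction_on with
  | refl => exact hv
  | head h' _ ih => exact hS.2 _ _ ih h'

/-- elements before an `S`-element on a chain are in `S`. -/
lemma prefix_in_S (hS : IsSourceSet T S) {l1 l2 : List V} {w : V} (hc : (l1 ++ w :: l2).Chain' T)
    (hw : w ∈ S) : ∀ t ∈ l1, t ∈ S := by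
  intro t ht
  have hpre : (l1 ++ [w]) <+: (l1 ++ w :: l2) := ⟨l2, by simp⟩
  have hc' : (l1 ++ [w]).Chain' T := hc.prefix hpre
  have hr : Relation.ReflTransGen T t w :=
    reach_last_of_chain' _ t hc' (by simp [ht]) (by simp)
  exact mem_S_of_reach_mem hS hr hw

lemma suffix_not_in_S (hS : IsSourceSet T S) {l1 l2 : List V} {w : V}
    (hc : (l1 ++ w :: l2).Chain' T) (hw : w ∉ S) : ∀ t ∈ l2, t ∉ S := by
  intro t ht hts
  obtain ⟨a1, a2, rfl⟩ := List.append_of_mem ht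
  have heq : (l1 ++ w :: a1) ++ t :: a2 = l1 ++ w :: (a1 ++ t :: a2) := by simp
  exact hw (prefix_in_S hS (by rw [heq]; exact hc) hts w (by simp))

/-- inside an SCC of a ditree, every underlying edge is bidirected. -/
lemma arc_of_adj_S (hT : IsDitree T) (hS : IsSourceSet T S) (hu : u ∈ S) (hv : v ∈ S)
    (hadj : (underlying T).Adj u v) : T u v := by
  obtain ⟨p, hp, hnd⟩ := reach_nodup_walk (hS.1.2.1 u hu v hv)
  obtain ⟨wp, hwp⟩ := exists_underlying_walk hT.1 p u v hp
  have hip : wp.IsPath := (SimpleGraph.Walk.isPath_def wp).2 (hwp ▸ hnd)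
  have w2 : (underlying T).Walk u v := SimpleGraph.Walk.cons hadj SimpleGraph.Walk.nil
  have hi2 : (SimpleGraph.Walk.cons hadj SimpleGraph.Walk.nil).IsPath := by
    rw [SimpleGraph.Walk.isPath_def]; simp [hadj.ne]
  have h2 := hT.2.2.path_unique ⟨wp, hip⟩ ⟨SimpleGraph.Walk.cons hadj SimpleGraph.Walk.nil, hi2⟩
  have h3 : wp = SimpleGraph.Walk.cons hadj SimpleGraph.Walk.nil := congrArg Subtype.val h2
  have hsup : p = [u, v] := by rw [← hwp, h3]; simp
  rw [hsup] at hp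
  exact List.isChain_pair.1 hp.1

lemma getLast?_append_right {l1 l2 : List V} (h : l2 ≠ []) :
    (l1 ++ l2).getLast? = l2.getLast? := by
  rw [List.getLast?_append, List.getLast?_eq_getLast h]
  rfl

lemma gate_lemma [Fintype V] (hT : IsDitree T) (hS : IsSourceSet T S)
    (hS2 : 2 ≤ S.ncard) (hnoleaf : ∀ v ∈ S, ¬ IsLeaf T v)
    (M : Set V) (hMg : IsGeodetic T M) (hxM : x ∈ M) (hxS : x ∈ S)
    (hMS : ∀ m ∈ M, m ∈ S → m = x) (hy : y ∈ S) :
    ∀ z ∈ S, ∃ v ∈ M, v ≠ x ∧ ∃ q, IsWalk T y v q ∧ q.Nodup ∧ z ∈ q := by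
  classical
  intro z hz
  set Good : List V → Prop :=
    fun q => q.Chain' T ∧ q.head? = some y ∧ q.Nodup ∧ (∀ w ∈ q, w ∈ S) ∧ z ∈ q with hGood
  obtain ⟨q0, hq0, hq0nd⟩ := reach_nodup_walk (hS.1.2.1 y hy z hz)
  have hq0good : Good q0 := ⟨hq0.1, hq0.2.1, hq0nd,
    fun w hw => mem_S_of_reach_mem hS (hq0.mem_reach_last hw) hz, hq0.last_mem⟩
  set P : ℕ → Prop := fun n => ∃ q, Good q ∧ q.length = n with hP
  obtain ⟨q, hqgood, hqlen⟩ :=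
    Nat.findGreatest_spec (P := P) hq0nd.length_le_card ⟨q0, hq0good, rfl⟩
  have hmax : ∀ q', Good q' → q'.length ≤ q.length := by
    intro q' hq'
    have := Nat.le_findGreatest (P := P) hq'.2.2.1.length_le_card ⟨q', hq', rfl⟩
    omega
  have hqne : q ≠ [] := by rintro rfl; exact absurd hqgood.2.2.2.2 (by simp)
  set ℓ := q.getLast hqne with hℓ
  have hql : q.getLast? = some ℓ := List.getLast?_eq_getLast hqne
  have hqwalk : IsWalk T y ℓ q := ⟨hqgood.1, hqgood.2.1, hql⟩
  have hℓS : ℓ ∈ S := hqgood.2.2.2.1 ℓ hqwalk.last_mem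
  -- maximality: every S-successor of ℓ lies on q
  have hext : ∀ w ∈ S, T ℓ w → w ∈ q := by
    intro w hwS harc
    by_contra hwq
    have hgood' : Good (q ++ [w]) := by
      refine ⟨(hqwalk.tail_arc harc).1, ?_, ?_, ?_, ?_⟩
      · rw [List.head?_append_of_ne_nil q hqne]; exact hqgood.2.1
      · exact List.nodup_append'.2 ⟨hqgood.2.2.1, by simp, by
          intro t ht ht'; simp at ht'; subst ht'; exact hwq ht⟩
      · intro t ht; rcases List.mem_append.1 ht with h | h
        · exact hqgood.2.2.2.1 t h
        · simp at h; subst h; exact hwS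
      · exact List.mem_append.2 (Or.inl hqgood.2.2.2.2)
    have := hmax _ hgood'
    simp at this
  -- any S-neighbour of ℓ is the penultimate vertex of q
  have hpen : ∀ w, (underlying T).Adj ℓ w → w ∈ S → ∃ q1, q = q1 ++ [w, ℓ] := by
    intro w hadj hwS
    have harc : T ℓ w := arc_of_adj_S hT hS hℓS hwS hadj
    have harc' : T w ℓ := arc_of_adj_S hT hS hwS hℓS hadj.symm
    obtain ⟨q1, q2, hdec⟩ := List.append_of_mem (hext w hwS harc)
    have hsufwalk : IsWalk T w ℓ (w :: q2) := by
      refine ⟨hqgood.1.suffix ⟨q1, hdec.symm⟩, rfl, ?_⟩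
      rw [hdec, getLast?_append_right (by simp)] at hql; exact hql
    have hsufnd : (w :: q2).Nodup := (List.IsSuffix.sublist ⟨q1, hdec.symm⟩).nodup hqgood.2.2.1
    have hedge : IsWalk T w ℓ [w, ℓ] := ⟨List.isChain_pair.2 harc', rfl, rfl⟩
    have heq : w :: q2 = [w, ℓ] :=
      nodup_walk_unique hT hsufwalk hsufnd hedge (by simp [hadj.ne.symm])
    refine ⟨q1, by rw [hdec, heq]⟩
  have huniq : ∀ w1 w2, (underlying T).Adj ℓ w1 → w1 ∈ S →
      (underlying T).Adj ℓ w2 → w2 ∈ S → w1 = w2 := by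
    intro w1 w2 h1 h1S h2 h2S
    obtain ⟨q1, he1⟩ := hpen w1 h1 h1S
    obtain ⟨q2, he2⟩ := hpen w2 h2 h2S
    have hlen : q1.length = q2.length := by
      have := congrArg List.length (he1.symm.trans he2); simp at this; omega
    have := (List.append_inj (he1.symm.trans he2) hlen).2
    simpa using this
  -- ℓ has an S-neighbour
  have hSnb : ∃ c, (underlying T).Adj ℓ c ∧ c ∈ S := by
    obtain ⟨a1, b1, ha1, hb1, hab⟩ := (Set.one_lt_ncard_iff (Set.toFinite S)).1 (by omega)
    have hs : ∃ s ∈ S, s ≠ ℓ := by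
      by_cases h : a1 = ℓ
      · exact ⟨b1, hb1, by rw [← h]; exact fun he => hab he.symm⟩
      · exact ⟨a1, ha1, h⟩
    obtain ⟨s, hsS, hsl⟩ := hs
    obtain ⟨r, hr, hrnd⟩ := reach_nodup_walk (hS.1.2.1 ℓ hℓS s hsS)
    cases r with
    | nil => exact absurd rfl (walk_ne_nil hr)
    | cons b t =>
      have hb : b = ℓ := by have := hr.2.1; simpa using this
      subst hb
      cases t with
      | nil => exact absurd (by have := hr.2.2; simpa using this) hsl.symm
      | cons c t' =>
        have harc : T ℓ c := (List.isChain_cons_cons.1 hr.1).1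
        exact ⟨c, adj_of_arc hT.1 harc,
          mem_S_of_reach_mem hS (hr.mem_reach_last (by simp)) hsS⟩
  -- ℓ has a neighbour outside S
  have hout : ∃ aa, (underlying T).Adj ℓ aa ∧ aa ∉ S := by
    obtain ⟨c, hcadj, hcS⟩ := hSnb
    have hfin : ((underlying T).neighborSet ℓ).Finite := Set.toFinite _
    have hpos : 0 < ((underlying T).neighborSet ℓ).ncard :=
      (Set.ncard_pos hfin).2 ⟨c, hcadj⟩
    have hne1 : ((underlying T).neighborSet ℓ).ncard ≠ 1 := hnoleaf ℓ hℓS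
    obtain ⟨a1, b1, ha1, hb1, hab⟩ :=
      (Set.one_lt_ncard_iff hfin).1 (by omega)
    by_contra hcon; push_neg at hcon
    exact hab (huniq a1 b1 ha1 (hcon a1 ha1) hb1 (hcon b1 hb1))
  obtain ⟨aa, haadj, haS⟩ := hout
  have harcla : T ℓ aa := by
    rcases haadj.2 with h | h
    · exact h
    · exact absurd (hS.2 aa ℓ hℓS h) haS
  -- cover aa by M
  obtain ⟨u0, hu0, v0, hv0, hint⟩ := hMg aa
  obtain ⟨p, hp, hpnd, hap⟩ := (mem_interval_iff hT).1 hint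
  obtain ⟨pa, pb, hpdec⟩ := List.append_of_mem hap
  have hpbS : ∀ t ∈ pb, t ∉ S := suffix_not_in_S hS (hpdec ▸ hp.1) haS
  -- final walk
  set L := q ++ (aa :: pb) with hL
  have hLc : L.Chain' T := by
    refine List.isChain_append.2 ⟨hqgood.1, hp.1.suffix ⟨pa, hpdec.symm⟩, ?_⟩
    intro t ht s hs
    rw [hql] at ht; simp at ht hs; subst ht; subst hs; exact harcla
  have hLlast : L.getLast? = some v0 := by
    rw [hL, getLast?_append_right (l2 := aa :: pb) (by simp)]
    have := hp.2.2
    rw [hpdec, getLast?_append_right (by simp)] at this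
    exact this
  have hLwalk : IsWalk T y v0 L := by
    refine ⟨hLc, ?_, hLlast⟩
    rw [hL, List.head?_append_of_ne_nil q hqne]; exact hqgood.2.1
  have hLnd : L.Nodup := by
    refine List.nodup_append'.2 ⟨hqgood.2.2.1,
      (List.IsSuffix.sublist ⟨pa, hpdec.symm⟩).nodup hpnd, ?_⟩
    intro t ht ht'
    have htS : t ∈ S := hqgood.2.2.2.1 t ht
    rcases List.mem_cons.1 ht' with rfl | h
    · exact haS htS
    · exact hpbS t h htS
  have hv0S : v0 ∉ S := by
    have hv0mem : v0 ∈ (aa :: pb) := by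
      have hw' : IsWalk T aa v0 (aa :: pb) := by
        refine ⟨hp.1.suffix ⟨pa, hpdec.symm⟩, rfl, ?_⟩
        have := hp.2.2; rw [hpdec, getLast?_append_right (by simp)] at this; exact this
      exact hw'.last_mem
    rcases List.mem_cons.1 hv0mem with rfl | h
    · exact haS
    · exact hpbS v0 h
  exact ⟨v0, hv0, fun he => hv0S (he ▸ hxS), L, hLwalk, hLnd,
    List.mem_append.2 (Or.inl hqgood.2.2.2.2)⟩

lemma source_main [Fintype V] (hT : IsDitree T) (hS : IsSourceSet T S)
    (hS2 : 2 ≤ S.ncard) (hnoleaf : ∀ v ∈ S, ¬ IsLeaf T v)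
    (M : Set V) (hM : IsMinGeodetic T M)
    (hx : M ∩ S = {x}) (hy : y ∈ S) (hyx : y ≠ x) :
    IsMinGeodetic T ((M \ {x}) ∪ {y}) := by
  classical
  have hxMS : x ∈ M ∩ S := by rw [hx]; rfl
  have hxM : x ∈ M := hxMS.1
  have hxS : x ∈ S := hxMS.2
  have hMS : ∀ m ∈ M, m ∈ S → m = x := by
    intro m hm hmS
    have : m ∈ M ∩ S := ⟨hm, hmS⟩
    rwa [hx] at this
  set N : Set V := (M \ {x}) ∪ {y} with hN
  have hyN : y ∈ N := Or.inr rfl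
  have hmemN : ∀ m ∈ M, m ∉ S → m ∈ N := by
    intro m hm hmS
    exact Or.inl ⟨hm, fun he => hmS (by rw [Set.mem_singleton_iff] at he; rw [he]; exact hxS)⟩
  have hgeo : IsGeodetic T N := by
    intro z
    by_cases hzS : z ∈ S
    · obtain ⟨v, hvM, hvx, q, hw, hnd, hzq⟩ :=
        gate_lemma hT hS hS2 hnoleaf M hM.1 hxM hxS hMS hy z hzS
      exact ⟨y, hyN, v, Or.inl ⟨hvM, hvx⟩, (mem_interval_iff hT).2 ⟨q, hw, hnd, hzq⟩⟩
    · obtain ⟨u, huM, v, hvM, hint⟩ := hM.1 z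
      obtain ⟨p, hp, hpnd, hzp⟩ := (mem_interval_iff hT).1 hint
      have hvS : v ∉ S := fun hvS => hzS (mem_S_of_reach_mem hS (hp.mem_reach_last hzp) hvS)
      by_cases huS : u ∈ S
      · -- u = x; reroute through y
        have hux : u = x := hMS u huM huS
        set p1 := p.takeWhile (fun w => decide (w ∈ S)) with hp1
        set p2 := p.dropWhile (fun w => decide (w ∈ S)) with hp2
        have hsplit : p1 ++ p2 = p := List.takeWhile_append_dropWhile
        have hp1S : ∀ t ∈ p1, t ∈ S := by
          intro t ht; have := List.mem_takeWhile_imp ht; simpa using this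
        have hzp2 : z ∈ p2 := by
          rcases List.mem_append.1 (by rw [hsplit]; exact hzp) with h | h
          · exact absurd (hp1S z h) hzS
          · exact h
        obtain ⟨h2, t2, hp2eq⟩ : ∃ h2 t2, p2 = h2 :: t2 := by
          cases hc : p2 with
          | nil => rw [hc] at hzp2; simp at hzp2
          | cons a b => exact ⟨a, b, rfl⟩
        have hh2S : h2 ∉ S := by
          have := List.head?_dropWhile_not (fun w => decide (w ∈ S)) p
          rw [← hp2, hp2eq] at this
          simpa using this
        have hp1ne : p1 ≠ [] := by
          intro hc
          have : p.head? = some h2 := by rw [← hsplit, hc, hp2eq]; rfl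
          rw [hp.2.1] at this
          simp at this
          exact hh2S (this ▸ huS)
        set g := p1.getLast hp1ne with hg
        have hgl : p1.getLast? = some g := List.getLast?_eq_getLast hp1ne
        have hgS : g ∈ S := hp1S g (List.getLast_mem hp1ne)
        have hchainp : (p1 ++ h2 :: t2).Chain' T := by
          rw [← hp2eq, hsplit]; exact hp.1
        have harc : T g h2 := by
          have := (List.isChain_append.1 hchainp).2.2
          exact this g (by rw [hgl]; rfl) h2 rfl
        have hp2notS : ∀ t ∈ p2, t ∉ S := by
          intro t ht
          rw [hp2eq] at ht
          rcases List.mem_cons.1 ht with rfl | h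
          · exact hh2S
          · exact suffix_not_in_S hS hchainp hh2S t h
        obtain ⟨r, hr, hrnd⟩ := reach_nodup_walk (hS.1.2.1 y hy g hgS)
        have hrS : ∀ t ∈ r, t ∈ S := fun t ht =>
          mem_S_of_reach_mem hS (hr.mem_reach_last ht) hgS
        set L := r ++ p2 with hL
        have hp2suf : p2 <:+ p := ⟨p1, hsplit⟩
        have hLwalk : IsWalk T y v L := by
          refine ⟨?_, ?_, ?_⟩
          · refine List.isChain_append.2 ⟨hr.1, hp.1.suffix hp2suf, ?_⟩
            intro s hs t ht
            rw [hr.2.2] at hs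
            rw [hp2eq] at ht
            simp at hs ht; subst hs; subst ht; exact harc
          · rw [hL, List.head?_append_of_ne_nil r (walk_ne_nil hr)]; exact hr.2.1
          · rw [hL, getLast?_append_right (by rw [hp2eq]; simp), ← hp.2.2, ← hsplit,
              getLast?_append_right (by rw [hp2eq]; simp)]
        have hLnd : L.Nodup := by
          refine List.nodup_append'.2 ⟨hrnd, hp2suf.sublist.nodup hpnd, ?_⟩
          intro t ht ht'
          exact hp2notS t ht' (hrS t ht)
        exact ⟨y, hyN, v, hmemN v hvM hvS,
          (mem_interval_iff hT).2 ⟨L, hLwalk, hLnd, List.mem_append.2 (Or.inr hzp2)⟩⟩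
      · exact ⟨u, hmemN u huM huS, v, hmemN v hvM hvS,
          (mem_interval_iff hT).2 ⟨p, hp, hpnd, hzp⟩⟩
  have hyM : y ∉ M \ {x} := by
    rintro ⟨hyMem, -⟩
    exact hyx (hMS y hyMem hy)
  have hcard : N.ncard = M.ncard := by
    rw [hN, Set.union_singleton, Set.ncard_insert_of_notMem hyM (Set.toFinite _)]
    exact Set.ncard_diff_singleton_add_one hxM (Set.toFinite _)
  exact ⟨hgeo, fun T' hT' => by rw [hcard]; exact hM.2 T' hT'⟩

end Source

section Flip

variable {T : V → V → Prop} {u v : V} {A S : Set V}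

lemma isWalk_swap {p : List V} : IsWalk (Function.swap T) u v p ↔ IsWalk T v u p.reverse := by
  unfold IsWalk List.Chain'
  rw [List.head?_reverse, List.getLast?_reverse, List.isChain_reverse]
  constructor
  · rintro ⟨a, b, c⟩; exact ⟨a, c, b⟩
  · rintro ⟨a, b, c⟩; exact ⟨a, c, b⟩

lemma interval_swap : interval (Function.swap T) u v = interval T v u := by
  ext a
  constructor
  · rintro ⟨p, hw, hmin, ha⟩
    refine ⟨p.reverse, isWalk_swap.1 hw, ?_, by simpa using ha⟩
    intro q hq
    have hq' : IsWalk (Function.swap T) u v q.reverse := by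
      rw [isWalk_swap, List.reverse_reverse]; exact hq
    have := hmin q.reverse hq'
    simpa using this
  · rintro ⟨p, hw, hmin, ha⟩
    have hw' : IsWalk (Function.swap T) u v p.reverse := by
      rw [isWalk_swap, List.reverse_reverse]; exact hw
    refine ⟨p.reverse, hw', ?_, by simpa using ha⟩
    intro q hq
    have := hmin q.reverse (isWalk_swap.1 hq)
    simpa using this

lemma underlying_swap : underlying (Function.swap T) = underlying T := by
  ext a b
  constructor
  · rintro ⟨h1, h2⟩; exact ⟨h1, h2.symm⟩
  · rintro ⟨h1, h2⟩; exact ⟨h1, h2.symm⟩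

lemma ditree_swap (hT : IsDitree T) : IsDitree (Function.swap T) :=
  ⟨fun w h => hT.1 w h, by rw [underlying_swap]; exact hT.2⟩

lemma leaf_swap : IsLeaf (Function.swap T) v ↔ IsLeaf T v := by
  unfold IsLeaf; rw [underlying_swap]

lemma sink_to_source (h : IsSinkSet T S) : IsSourceSet (Function.swap T) S := by
  obtain ⟨⟨hne, hconn, hmaxi⟩, harc⟩ := h
  refine ⟨⟨hne, fun a ha b hb => Relation.reflTransGen_swap.2 (hconn b hb a ha), ?_⟩, ?_⟩
  · intro A hSA hA
    exact hmaxi A hSA (fun a ha b hb => Relation.reflTransGen_swap.1 (hA b hb a ha))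
  · intro a b hbS harc'
    exact harc b a hbS harc'

lemma geodetic_swap : IsGeodetic (Function.swap T) A ↔ IsGeodetic T A := by
  constructor
  · intro h z
    obtain ⟨a, ha, b, hb, hz⟩ := h z
    exact ⟨b, hb, a, ha, interval_swap ▸ hz⟩
  · intro h z
    obtain ⟨a, ha, b, hb, hz⟩ := h z
    refine ⟨b, hb, a, ha, ?_⟩
    rw [interval_swap]; exact hz

lemma minGeodetic_swap : IsMinGeodetic (Function.swap T) A ↔ IsMinGeodetic T A := by
  unfold IsMinGeodetic
  constructor
  · rintro ⟨h1, h2⟩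
    exact ⟨geodetic_swap.1 h1, fun B hB => h2 B (geodetic_swap.2 hB)⟩
  · rintro ⟨h1, h2⟩
    exact ⟨geodetic_swap.2 h1, fun B hB => h2 B (geodetic_swap.1 hB)⟩

end Flip

/-- Let `T` be a ditree and `S` a source set or a sink set of
`T` of size at least 2 containing no leaf. If `M` is a minimum geodetic set of
`T` containing exactly one vertex `x` of `S`, then the set obtained from `M`
by replacing `x` by any other vertex `y` of `S` is also a minimum geodetic set
of `T`. -/
theorem replace_in_sourceSet_isMinGeodetic [Fintype V] (T : V → V → Prop)
    (hT : IsDitree T) (S : Set V) (hS : IsSourceSet T S ∨ IsSinkSet T S)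
    (hS2 : 2 ≤ S.ncard) (hnoleaf : ∀ v ∈ S, ¬ IsLeaf T v)
    (M : Set V) (hM : IsMinGeodetic T M)
    (x : V) (hx : M ∩ S = {x})
    (y : V) (hy : y ∈ S) (hyx : y ≠ x) :
    IsMinGeodetic T ((M \ {x}) ∪ {y}) := by
  rcases hS with hsrc | hsink
  · exact source_main hT hsrc hS2 hnoleaf M hM hx hy hyx
  · have h := source_main (ditree_swap hT) (sink_to_source hsink) hS2
      (fun w hw hl => hnoleaf w hw (leaf_swap.1 hl)) M (minGeodetic_swap.2 hM) hx hy hyx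
    exact minGeodetic_swap.1 h


end GeoPaper
end

section
/- Let G be an undirected graph with feedback edge set number fen(G) ≥ 1. Then the base graph of G has at most 2·fen(G) − 2 core vertices and at most 3·fen(G) − 3 core paths. -/
namespace GeoPaper

variable {V : Type*}

variable {V : Type*}

/-- degree of `v` inside the vertex subset `W` of the graph `G`. -/
noncomputable def degIn (G : SimpleGraph V) (W : Set V) (v : V) : ℕ := {u | u ∈ W ∧ G.Adj v u}.ncard

/-- one round of pruning: delete all vertices of degree exactly 1. -/
def pruneStep (G : SimpleGraph V) (W : Set V) : Set V := {v | v ∈ W ∧ degIn G W v ≠ 1}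

/-- the vertex set of the base graph of `G`, obtained by iteratively deleting
degree-1 vertices until none remain. -/
def baseSet (G : SimpleGraph V) : Set V := ⋂ k, (pruneStep G)^[k] Set.univ

/-- a core vertex: a vertex of degree at least 3 in the base graph. -/
def IsCoreVertex (G : SimpleGraph V) (v : V) : Prop :=
  v ∈ baseSet G ∧ 3 ≤ degIn G (baseSet G) v

/-- the inner vertices of a path represented as a list of its vertices. -/
def innerList (p : List V) : List V := (p.drop 1).dropLast

/-- a core path of the base graph of `G`: a path between two core vertices all
of whose internal vertices have degree 2 in the base graph (the two endpoints
may coincide, in which case the core path is a core cycle). -/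
def IsCorePath (G : SimpleGraph V) (p : List V) : Prop :=
  ∃ a q b, p = a :: (q ++ [b]) ∧
    p.Chain' G.Adj ∧
    (∀ v ∈ p, v ∈ baseSet G) ∧
    IsCoreVertex G a ∧ IsCoreVertex G b ∧
    q.Nodup ∧ (∀ v ∈ q, v ≠ a ∧ v ≠ b ∧ degIn G (baseSet G) v = 2) ∧
    (a = b → 4 ≤ p.length) ∧ (a ≠ b → p.Nodup)

/-- the feedback edge set number: the minimum number of edges whose deletion
yields a forest. -/
noncomputable def fen (G : SimpleGraph V) : ℕ :=
  sInf {k | ∃ F : Set (Sym2 V), F ⊆ G.edgeSet ∧ F.ncard = k ∧ (G.deleteEdges F).IsAcyclic}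

/-- the feedback vertex set number: the minimum number of vertices whose
deletion yields a forest. -/
noncomputable def fvn (G : SimpleGraph V) : ℕ :=
  sInf {k | ∃ W : Set V, W.ncard = k ∧ (G.induce Wᶜ).IsAcyclic}




/-! ### Auxiliary machinery -/

section Aux

lemma pruneStep_subset (G : SimpleGraph V) (W : Set V) : pruneStep G W ⊆ W :=
  fun _ h => h.1

lemma iter_succ (G : SimpleGraph V) (k : ℕ) :
    (pruneStep G)^[k+1] Set.univ = pruneStep G ((pruneStep G)^[k] Set.univ) :=
  Function.iterate_succ_apply' _ _ _

lemma iter_anti (G : SimpleGraph V) : ∀ {m n : ℕ}, m ≤ n →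
    (pruneStep G)^[n] Set.univ ⊆ (pruneStep G)^[m] Set.univ := by
  intro m n h
  induction h with
  | refl => exact subset_rfl
  | step h ih => exact (by rw [iter_succ]; exact (pruneStep_subset _ _).trans ih)

lemma exists_fixed [Fintype V] (G : SimpleGraph V) :
    ∃ k, (pruneStep G)^[k+1] Set.univ = (pruneStep G)^[k] Set.univ := by
  by_contra h
  push_neg at h
  have key : ∀ k, ((pruneStep G)^[k] Set.univ).ncard + k ≤ (Set.univ : Set V).ncard := by
    intro k
    induction k with
    | zero => simp
    | succ k ih =>
      have hlt : ((pruneStep G)^[k+1] Set.univ).ncard < ((pruneStep G)^[k] Set.univ).ncard := by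
        apply Set.ncard_lt_ncard
        · refine ssubset_of_subset_of_ne ?_ (h k)
          rw [iter_succ]; exact pruneStep_subset _ _
        · exact Set.toFinite _
      omega
  have := key ((Set.univ : Set V).ncard + 1)
  omega

lemma baseSet_eq_iter [Fintype V] (G : SimpleGraph V) :
    ∃ k, baseSet G = (pruneStep G)^[k] Set.univ ∧
      pruneStep G (baseSet G) = baseSet G := by
  obtain ⟨k, hk⟩ := exists_fixed G
  have hstable : ∀ n, k ≤ n → (pruneStep G)^[n] Set.univ = (pruneStep G)^[k] Set.univ := by
    intro n hn
    induction hn with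
    | refl => rfl
    | step h ih => rw [iter_succ, ih, ← iter_succ, hk]
  have hbase : baseSet G = (pruneStep G)^[k] Set.univ := by
    apply subset_antisymm
    · exact Set.iInter_subset _ k
    · intro x hx
      refine Set.mem_iInter.2 fun n => ?_
      rcases le_or_gt n k with h | h
      · exact iter_anti G h hx
      · rw [hstable n h.le]; exact hx
  refine ⟨k, hbase, ?_⟩
  rw [hbase, ← iter_succ, hk]

lemma baseSet_no_deg_one [Fintype V] (G : SimpleGraph V) {v : V} (hv : v ∈ baseSet G) :
    degIn G (baseSet G) v ≠ 1 := by
  obtain ⟨k, _, hfix⟩ := baseSet_eq_iter G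
  rw [← hfix] at hv
  exact hv.2

lemma acyclic_mono {K L : SimpleGraph V} (h : K ≤ L) (hL : L.IsAcyclic) : K.IsAcyclic := by
  intro v c hc
  exact hL (c.mapLe h) (hc.mapLe h)

/-- A finite acyclic graph whose edges have endpoints in `S` has at most `|S| - 1` edges. -/
lemma forest_bound [Fintype V] :
    ∀ (n : ℕ) (S : Finset V) (K : SimpleGraph V), S.card = n → K.IsAcyclic →
      (∀ u v, K.Adj u v → u ∈ S) → S.Nonempty →
      K.edgeSet.ncard + 1 ≤ S.card := by
  intro n
  induction n using Nat.strong_induction_on with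
  | _ n IH =>
    intro S K hcard hac hend hne
    classical
    rcases Set.eq_empty_or_nonempty K.edgeSet with he | ⟨e, he⟩
    · simp only [he, Set.ncard_empty]
      exact Finset.card_pos.2 hne
    · induction e using Sym2.ind with
      | _ u v =>
      have huv : K.Adj u v := he
      have hbr : K.IsBridge s(u, v) :=
        (SimpleGraph.isAcyclic_iff_forall_adj_isBridge.mp hac) huv
      have hnr : ¬ (K \ SimpleGraph.fromEdgeSet {s(u, v)}).Reachable u v :=
        SimpleGraph.isBridge_iff.mp hbr
      set K' : SimpleGraph V := K \ SimpleGraph.fromEdgeSet {s(u, v)} with hK'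
      have hK'le : K' ≤ K := sdiff_le
      have hK'ac : K'.IsAcyclic := acyclic_mono hK'le hac
      -- split into reachable / nonreachable parts
      set K₁ : SimpleGraph V :=
        { Adj := fun a b => K'.Adj a b ∧ K'.Reachable u a ∧ K'.Reachable u b
          symm := ⟨fun a b h => ⟨h.1.symm, h.2.2, h.2.1⟩⟩
          loopless := ⟨fun a h => K'.loopless.irrefl a h.1⟩ } with hK₁
      set K₂ : SimpleGraph V :=
        { Adj := fun a b => K'.Adj a b ∧ ¬ K'.Reachable u a ∧ ¬ K'.Reachable u b
          symm := ⟨fun a b h => ⟨h.1.symm, h.2.2, h.2.1⟩⟩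
          loopless := ⟨fun a h => K'.loopless.irrefl a h.1⟩ } with hK₂
      set S₁ : Finset V := S.filter (fun a => K'.Reachable u a) with hS₁
      set S₂ : Finset V := S.filter (fun a => ¬ K'.Reachable u a) with hS₂
      have hU : u ∈ S₁ := by
        simp only [hS₁, Finset.mem_filter]
        exact ⟨hend u v huv, SimpleGraph.Reachable.refl u⟩
      have hVmem : v ∈ S₂ := by
        simp only [hS₂, Finset.mem_filter]
        exact ⟨hend v u huv.symm, hnr⟩
      have hS₁lt : S₁.card < n := by
        rw [← hcard]
        apply Finset.card_lt_card
        refine ⟨Finset.filter_subset _ _, fun hsub => ?_⟩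
        have := hsub (hend v u huv.symm)
        simp only [hS₁, Finset.mem_filter] at this
        exact hnr this.2
      have hS₂lt : S₂.card < n := by
        rw [← hcard]
        apply Finset.card_lt_card
        refine ⟨Finset.filter_subset _ _, fun hsub => ?_⟩
        have := hsub (hend u v huv)
        simp only [hS₂, Finset.mem_filter] at this
        exact this.2 (SimpleGraph.Reachable.refl u)
      have h1 : K₁.edgeSet.ncard + 1 ≤ S₁.card := by
        refine IH _ hS₁lt S₁ K₁ rfl (acyclic_mono (fun a b h => h.1) hK'ac) ?_ ⟨u, hU⟩
        intro a b h
        simp only [hS₁, Finset.mem_filter]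
        exact ⟨hend a b (hK'le h.1), h.2.1⟩
      have h2 : K₂.edgeSet.ncard + 1 ≤ S₂.card := by
        refine IH _ hS₂lt S₂ K₂ rfl (acyclic_mono (fun a b h => h.1) hK'ac) ?_ ⟨v, hVmem⟩
        intro a b h
        simp only [hS₂, Finset.mem_filter]
        exact ⟨hend a b (hK'le h.1), h.2.1⟩
      -- edge set decomposition
      have hreach : ∀ a b, K'.Adj a b → (K'.Reachable u a ↔ K'.Reachable u b) :=
        fun a b h => ⟨fun r => r.trans h.reachable, fun r => r.trans h.symm.reachable⟩
      have hsplit : K'.edgeSet = K₁.edgeSet ∪ K₂.edgeSet := by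
        ext e
        induction e using Sym2.ind with
        | _ a b =>
        simp only [SimpleGraph.mem_edgeSet, Set.mem_union, hK₁, hK₂]
        constructor
        · intro h
          by_cases hr : K'.Reachable u a
          · exact Or.inl ⟨h, hr, (hreach a b h).mp hr⟩
          · exact Or.inr ⟨h, hr, fun r => hr ((hreach a b h).mpr r)⟩
        · rintro (h | h) <;> exact h.1
      have hdisj : Disjoint K₁.edgeSet K₂.edgeSet := by
        rw [Set.disjoint_left]
        intro e h1' h2'
        induction e using Sym2.ind with
        | _ a b =>
        exact h2'.2.1 h1'.2.1
      have hK'card : K'.edgeSet.ncard = K₁.edgeSet.ncard + K₂.edgeSet.ncard := by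
        rw [hsplit, Set.ncard_union_eq hdisj (Set.toFinite _) (Set.toFinite _)]
      have hKK' : K.edgeSet = insert s(u,v) K'.edgeSet := by
        ext e
        simp only [hK', SimpleGraph.edgeSet_sdiff, SimpleGraph.edgeSet_fromEdgeSet]
        constructor
        · intro h
          by_cases heq : e = s(u, v)
          · exact Or.inl heq
          · refine Or.inr ⟨h, ?_⟩
            simp only [Set.mem_diff, Set.mem_singleton_iff, Set.mem_setOf_eq]
            intro hmem
            exact heq hmem.1
        · rintro (rfl | h)
          · exact he
          · exact h.1
      have hnotmem : s(u, v) ∉ K'.edgeSet := by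
        simp only [hK', SimpleGraph.edgeSet_sdiff, SimpleGraph.edgeSet_fromEdgeSet]
        rintro ⟨-, h⟩
        simp only [Set.mem_diff, Set.mem_singleton_iff, Set.mem_setOf_eq] at h
        exact h ⟨trivial, huv.ne⟩
      have hKcard : K.edgeSet.ncard = K'.edgeSet.ncard + 1 := by
        rw [hKK', Set.ncard_insert_of_notMem hnotmem (Set.toFinite _)]
      have hScards : S₁.card + S₂.card = S.card := by
        rw [hS₁, hS₂]
        exact Finset.card_filter_add_card_filter_not _
      omega


/-- The base graph of `G`. -/
def Hg (G : SimpleGraph V) : SimpleGraph V where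
  Adj u v := u ∈ baseSet G ∧ v ∈ baseSet G ∧ G.Adj u v
  symm := ⟨fun u v h => ⟨h.2.1, h.1, h.2.2.symm⟩⟩
  loopless := ⟨fun v h => G.loopless.irrefl v h.2.2⟩

lemma Hg_le (G : SimpleGraph V) : Hg G ≤ G := fun u v h => h.2.2

lemma Hg_neighborSet (G : SimpleGraph V) {v : V} (hv : v ∈ baseSet G) :
    (Hg G).neighborSet v = {u | u ∈ baseSet G ∧ G.Adj v u} := by
  ext u
  simp only [SimpleGraph.mem_neighborSet, Hg, Set.mem_setOf_eq]
  exact ⟨fun h => ⟨h.2.1, h.2.2⟩, fun h => ⟨hv, h.1, h.2⟩⟩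

lemma Hg_ncard_eq_degIn (G : SimpleGraph V) {v : V} (hv : v ∈ baseSet G) :
    ((Hg G).neighborSet v).ncard = degIn G (baseSet G) v := by
  rw [Hg_neighborSet G hv]; rfl

/-- Invariant carried along a core path tail. -/
structure Tail (G : SimpleGraph V) (w : V) (q : List V) (b : V) : Prop where
  chain : (w :: (q ++ [b])).Chain' G.Adj
  mem : ∀ v ∈ w :: (q ++ [b]), v ∈ baseSet G
  deg2 : ∀ v ∈ q, degIn G (baseSet G) v = 2
  degb : 3 ≤ degIn G (baseSet G) b
  nd1 : (w :: q).Nodup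
  nd2 : (q ++ [b]).Nodup
  n3 : q ≠ [] → 2 ≤ q.length ∨ w ≠ b

lemma tail_unique (G : SimpleGraph V) :
    ∀ (q q' : List V) (w b b' : V), Tail G w q b → Tail G w q' b' →
      (q ++ [b]).head? = (q' ++ [b']).head? → q ++ [b] = q' ++ [b'] := by
  intro q
  induction q with
  | nil =>
    intro q' w b b' ht ht' hh
    cases q' with
    | nil =>
      simp only [List.nil_append, List.head?_cons, Option.some.injEq] at hh
      rw [hh]
    | cons y t' =>
      exfalso
      simp only [List.nil_append, List.cons_append, List.head?_cons, Option.some.injEq] at hh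
      have h2 : degIn G (baseSet G) y = 2 := ht'.deg2 y (List.mem_cons_self)
      have h3 := ht.degb
      rw [← hh] at h2
      omega
  | cons y qt IH =>
    intro q' w b b' ht ht' hh
    cases q' with
    | nil =>
      exfalso
      simp only [List.nil_append, List.cons_append, List.head?_cons, Option.some.injEq] at hh
      have h2 : degIn G (baseSet G) y = 2 := ht.deg2 y (List.mem_cons_self)
      have h3 := ht'.degb
      rw [hh] at h2
      omega
    | cons y' qt' =>
      simp only [List.cons_append, List.head?_cons, Option.some.injEq] at hh
      subst hh
      -- next vertices
      obtain ⟨z, hz⟩ : ∃ z, (qt ++ [b]).head? = some z := by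
        cases qt <;> simp
      obtain ⟨z', hz'⟩ : ∃ z', (qt' ++ [b']).head? = some z' := by
        cases qt' <;> simp
      have hchain : (w :: y :: (qt ++ [b])).Chain' G.Adj := by
        simpa using ht.chain
      have hchain' : (w :: y :: (qt' ++ [b'])).Chain' G.Adj := by
        simpa using ht'.chain
      have hwy : G.Adj w y := hchain.rel_head
      have hyz : G.Adj y z := (List.isChain_cons_cons.mp hchain).2.rel_head? (by rw [hz]; rfl)
      have hyz' : G.Adj y z' := (List.isChain_cons_cons.mp hchain').2.rel_head? (by rw [hz']; rfl)
      -- memberships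
      have hzmem : z ∈ qt ++ [b] := List.mem_of_mem_head? (by rw [hz]; rfl)
      have hz'mem : z' ∈ qt' ++ [b'] := List.mem_of_mem_head? (by rw [hz']; rfl)
      have hwB : w ∈ baseSet G := ht.mem w (List.mem_cons_self)
      have hzB : z ∈ baseSet G := ht.mem z (by
        simp only [List.cons_append, List.mem_cons]
        right; right; simpa using hzmem)
      have hz'B : z' ∈ baseSet G := ht'.mem z' (by
        simp only [List.cons_append, List.mem_cons]
        right; right; simpa using hz'mem)
      have hyB : y ∈ baseSet G := ht.mem y (by simp)
      -- z ≠ w and z' ≠ w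
      have hzw : z ≠ w := by
        cases qt with
        | nil =>
          simp only [List.nil_append, List.head?_cons, Option.some.injEq] at hz
          have hn3 := ht.n3 (by simp)
          simp only [List.length_cons, List.length_nil] at hn3
          have hwb : w ≠ b := by rcases hn3 with h | h; omega; exact h
          subst hz
          exact fun he => hwb he.symm
        | cons c ct =>
          simp only [List.cons_append, List.head?_cons, Option.some.injEq] at hz
          subst hz
          intro he
          exact (List.nodup_cons.mp ht.nd1).1
            (by rw [← he]; exact List.mem_cons_of_mem _ (List.mem_cons_self))
      have hz'w : z' ≠ w := by
        cases qt' with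
        | nil =>
          simp only [List.nil_append, List.head?_cons, Option.some.injEq] at hz'
          have hn3 := ht'.n3 (by simp)
          simp only [List.length_cons, List.length_nil] at hn3
          have hwb : w ≠ b' := by rcases hn3 with h | h; omega; exact h
          subst hz'
          exact fun he => hwb he.symm
        | cons c ct =>
          simp only [List.cons_append, List.head?_cons, Option.some.injEq] at hz'
          subst hz'
          intro he
          exact (List.nodup_cons.mp ht'.nd1).1
            (by rw [← he]; exact List.mem_cons_of_mem _ (List.mem_cons_self))
      -- y has exactly two neighbours, w is one of them, so z = z'
      have hdegy : degIn G (baseSet G) y = 2 := ht.deg2 y (List.mem_cons_self)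
      have hzz' : z = z' := by
        have h2 : ({u | u ∈ baseSet G ∧ G.Adj y u}).ncard = 2 := hdegy
        obtain ⟨c, d, hcd, hset⟩ := Set.ncard_eq_two.mp h2
        have hw : w ∈ ({c, d} : Set V) := by rw [← hset]; exact ⟨hwB, hwy.symm⟩
        have hzm : z ∈ ({c, d} : Set V) := by rw [← hset]; exact ⟨hzB, hyz⟩
        have hz'm : z' ∈ ({c, d} : Set V) := by rw [← hset]; exact ⟨hz'B, hyz'⟩
        simp only [Set.mem_insert_iff, Set.mem_singleton_iff] at hw hzm hz'm
        rcases hw with rfl | rfl <;> rcases hzm with rfl | rfl <;>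
          rcases hz'm with rfl | rfl <;> first | rfl | (exfalso; tauto)
      -- recurse
      have htnew : Tail G y qt b := by
        constructor
        · exact (List.isChain_cons_cons.mp hchain).2
        · intro v hv
          exact ht.mem v (by
            simp only [List.cons_append, List.mem_cons] at hv ⊢
            tauto)
        · exact fun v hv => ht.deg2 v (List.mem_cons_of_mem _ hv)
        · exact ht.degb
        · exact (List.nodup_append.mp ht.nd2).1
        · exact (List.nodup_cons.mp ht.nd2).2
        · intro _
          right
          intro he
          have := ht.degb
          rw [← he] at this
          omega
      have htnew' : Tail G y qt' b' := by
        constructor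
        · exact (List.isChain_cons_cons.mp hchain').2
        · intro v hv
          exact ht'.mem v (by
            simp only [List.cons_append, List.mem_cons] at hv ⊢
            tauto)
        · exact fun v hv => ht'.deg2 v (List.mem_cons_of_mem _ hv)
        · exact ht'.degb
        · exact (List.nodup_append.mp ht'.nd2).1
        · exact (List.nodup_cons.mp ht'.nd2).2
        · intro _
          right
          intro he
          have := ht'.degb
          rw [← he] at this
          omega
      have := IH qt' y b b' htnew htnew' (by rw [hz, hz', hzz'])
      simp only [List.cons_append, List.cons.injEq]
      exact ⟨trivial, this⟩


lemma corePath_parts {G : SimpleGraph V} {p : List V} (h : IsCorePath G p) :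
    ∃ a q b, p = a :: (q ++ [b]) ∧ IsCoreVertex G a ∧ IsCoreVertex G b ∧ Tail G a q b := by
  obtain ⟨a, q, b, rfl, hchain, hmem, ha, hb, hnd, hq, hcyc, hpath⟩ := h
  refine ⟨a, q, b, rfl, ha, hb, ?_⟩
  constructor
  · exact hchain
  · exact hmem
  · exact fun v hv => (hq v hv).2.2
  · exact hb.2
  · exact List.nodup_cons.mpr ⟨fun hmem' => (hq a hmem').1 rfl, hnd⟩
  · refine List.nodup_append.mpr ⟨hnd, List.nodup_singleton b, ?_⟩
    intro v hv w hw
    simp only [List.mem_singleton] at hw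
    subst hw
    exact (hq v hv).2.1
  · intro hq0
    by_cases hab : a = b
    · left
      have h4 := hcyc hab
      have hlen : (a :: (q ++ [b])).length = q.length + 2 := by simp
      omega
    · exact Or.inr hab

lemma corePath_reverse {G : SimpleGraph V} {p : List V} (h : IsCorePath G p) :
    IsCorePath G p.reverse := by
  obtain ⟨a, q, b, rfl, hchain, hmem, ha, hb, hnd, hq, hcyc, hpath⟩ := h
  refine ⟨b, q.reverse, a, ?_, ?_, ?_, hb, ha, (List.nodup_reverse.mpr hnd), ?_, ?_, ?_⟩
  · simp
  · refine List.isChain_reverse.mpr ?_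
    exact hchain.imp (fun x y hxy => hxy.symm)
  · intro v hv
    exact hmem v (List.mem_reverse.mp hv)
  · intro v hv
    obtain ⟨h1, h2, h3⟩ := hq v (List.mem_reverse.mp hv)
    exact ⟨h2, h1, h3⟩
  · intro hba
    have h4 := hcyc hba.symm
    have hlen : (a :: (q ++ [b])).length = q.length + 2 := by simp
    have hlen2 : (a :: (q ++ [b])).reverse.length = q.reverse.length + 2 := by simp
    have hlen3 : q.reverse.length = q.length := by simp
    omega
  · intro hba
    exact List.nodup_reverse.mpr (hpath (fun he => hba he.symm))

lemma corePath_unique {G : SimpleGraph V} {p p' : List V}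
    (hp : IsCorePath G p) (hp' : IsCorePath G p')
    (h0 : p.head? = p'.head?) (h1 : p.tail.head? = p'.tail.head?) : p = p' := by
  obtain ⟨a, q, b, rfl, -, -, ht⟩ := corePath_parts hp
  obtain ⟨a', q', b', rfl, -, -, ht'⟩ := corePath_parts hp'
  simp only [List.head?_cons, Option.some.injEq] at h0
  subst h0
  simp only [List.tail_cons] at h1
  rw [tail_unique G q q' a b b' ht ht' h1]



/-- the first two vertices of a list, if they exist. -/
def firstTwo : List V → Option (V × V)
  | a :: x :: _ => some (a, x)
  | _ => none

lemma corePath_two {G : SimpleGraph V} {p : List V} (h : IsCorePath G p) :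
    ∃ a x t, p = a :: x :: t ∧ IsCoreVertex G a ∧ a ∈ baseSet G ∧ x ∈ baseSet G ∧ G.Adj a x := by
  obtain ⟨a, q, b, rfl, hchain, hmem, ha, hb, hnd, hq, hcyc, hpath⟩ := h
  obtain ⟨x, t, hxt⟩ : ∃ x t, q ++ [b] = x :: t := by
    cases q with
    | nil => exact ⟨b, [], rfl⟩
    | cons c ct => exact ⟨c, ct ++ [b], rfl⟩
  refine ⟨a, x, t, by rw [hxt], ha, hmem a (by simp), hmem x (by rw [hxt]; simp), ?_⟩
  · have : (a :: (x :: t)).Chain' G.Adj := by rw [← hxt]; exact hchain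
    exact this.rel_head

lemma corePath_firstTwo {G : SimpleGraph V} {p : List V} (h : IsCorePath G p) :
    ∃ a x, firstTwo p = some (a, x) := by
  obtain ⟨a, x, t, rfl, -⟩ := corePath_two h
  exact ⟨a, x, rfl⟩

lemma corePath_ft_unique {G : SimpleGraph V} {p p' : List V} {ab : V × V}
    (hp : IsCorePath G p) (hp' : IsCorePath G p')
    (h : firstTwo p = some ab) (h' : firstTwo p' = some ab) : p = p' := by
  obtain ⟨a, x, t, rfl, -⟩ := corePath_two hp
  obtain ⟨a', x', t', rfl, -⟩ := corePath_two hp'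
  simp only [firstTwo, Option.some.injEq] at h h'
  subst h
  rw [Prod.mk.injEq] at h'
  obtain ⟨rfl, rfl⟩ := h'
  exact corePath_unique hp hp' rfl rfl

lemma corePath_ft_ne {G : SimpleGraph V} {p : List V} {ab₁ ab₂ : V × V}
    (hp : IsCorePath G p) (h1 : firstTwo p = some ab₁)
    (h2 : firstTwo p.reverse = some ab₂) : ab₁ ≠ ab₂ := by
  obtain ⟨a, q, b, rfl, hchain, hmem, ha, hb, hnd, hq, hcyc, hpath⟩ := hp
  by_cases hab : a = b
  · -- core cycle: compare second entries
    subst hab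
    have h4 := hcyc rfl
    have hlen : (a :: (q ++ [a])).length = q.length + 2 := by simp
    have hqlen : 2 ≤ q.length := by omega
    obtain ⟨c, ct, rfl⟩ : ∃ c ct, q = c :: ct := by
      cases q with
      | nil => simp at hqlen
      | cons c ct => exact ⟨c, ct, rfl⟩
    have hctne : ct ≠ [] := by
      intro hct
      rw [hct] at hqlen
      simp at hqlen
    obtain ⟨e, er, hrev⟩ : ∃ e er, ct.reverse = e :: er := by
      cases hct : ct.reverse with
      | nil => exact absurd (by simpa using congrArg List.reverse hct) hctne
      | cons e er => exact ⟨e, er, rfl⟩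
    have hft1 : (a, c) = ab₁ := by
      simp only [List.cons_append, firstTwo, Option.some.injEq] at h1
      exact h1
    have hpr : (a :: ((c :: ct) ++ [a])).reverse = a :: ((e :: er) ++ ([c] ++ [a])) := by
      rw [← hrev]; simp
    rw [hpr] at h2
    have hft2 : (a, e) = ab₂ := by
      simp only [List.cons_append, firstTwo, Option.some.injEq] at h2
      exact h2
    rw [← hft1, ← hft2]
    intro he
    have hce : c = e := congrArg Prod.snd he
    have heint : e ∈ ct := List.mem_reverse.mp (by rw [hrev]; exact List.mem_cons_self)
    exact (List.nodup_cons.mp hnd).1 (by rw [hce]; exact heint)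
  · intro he
    obtain ⟨x, t, hxt⟩ : ∃ x t, q ++ [b] = x :: t := by
      cases q with
      | nil => exact ⟨b, [], rfl⟩
      | cons c ct => exact ⟨c, ct ++ [b], rfl⟩
    have hrevform : (a :: (q ++ [b])).reverse = b :: (q.reverse ++ [a]) := by simp
    obtain ⟨y, s, hys⟩ : ∃ y s, q.reverse ++ [a] = y :: s := by
      cases hq' : q.reverse with
      | nil => exact ⟨a, [], by simp [hq']⟩
      | cons c ct => exact ⟨c, ct ++ [a], by simp [hq']⟩
    rw [hxt] at h1
    rw [hrevform, hys] at h2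
    simp only [firstTwo, Option.some.injEq] at h1 h2
    rw [← h1, ← h2] at he
    exact hab (congrArg Prod.fst he)

end Aux

section Counting

variable [Fintype V]

lemma counts (G : SimpleGraph V) {F : Set (Sym2 V)} (hF : F ⊆ G.edgeSet)
    (hac : (G.deleteEdges F).IsAcyclic) (h1 : 1 ≤ F.ncard) :
    {v | IsCoreVertex G v}.ncard + 2 ≤ 2 * F.ncard ∧
    {s : Set (List V) | ∃ p, IsCorePath G p ∧ s = {p, p.reverse}}.ncard + 3 ≤ 3 * F.ncard := by
  classical
  set B := baseSet G with hB
  set H := Hg G with hH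
  -- degrees
  have hdegnb : ∀ v, H.degree v = ((H.neighborSet v)).ncard := by
    intro v
    rw [Set.ncard_eq_toFinset_card']
    rfl
  have hadj_mem : ∀ {u v}, H.Adj u v → u ∈ B := fun h => h.1
  have hdeg_pos_mem : ∀ v, 0 < H.degree v → v ∈ B := by
    intro v hv
    obtain ⟨u, hu⟩ := (H.degree_pos_iff_exists_adj v).mp hv
    exact hadj_mem hu
  have hdeg2 : ∀ v, 0 < H.degree v → 2 ≤ H.degree v := by
    intro v hv
    have hvB : v ∈ B := hdeg_pos_mem v hv
    have := baseSet_no_deg_one G hvB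
    rw [← Hg_ncard_eq_degIn G hvB, ← hdegnb] at this
    omega
  set S' : Finset V := Finset.univ.filter (fun v => 0 < H.degree v) with hS'
  set Cf : Finset V := S'.filter (fun v => 3 ≤ H.degree v) with hCf
  have hcore : {v | IsCoreVertex G v} = ↑Cf := by
    ext v
    simp only [Set.mem_setOf_eq, hCf, hS', Finset.coe_filter, Finset.mem_filter,
      Finset.mem_univ, true_and, Set.mem_setOf_eq, IsCoreVertex]
    constructor
    · intro ⟨hvB, hd⟩
      rw [← Hg_ncard_eq_degIn G hvB, ← hdegnb] at hd
      exact ⟨by omega, hd⟩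
    · rintro ⟨hpos, hd⟩
      have hvB : v ∈ B := hdeg_pos_mem v hpos
      rw [← Hg_ncard_eq_degIn G hvB, ← hdegnb]
      exact ⟨hvB, hd⟩
  -- handshake
  have hhs : ∑ v ∈ S', H.degree v = 2 * H.edgeFinset.card := by
    rw [← SimpleGraph.sum_degrees_eq_twice_card_edges]
    refine Finset.sum_subset (Finset.subset_univ S') ?_
    intro v _ hv
    rw [hS', Finset.mem_filter] at hv
    simp only [Finset.mem_univ, true_and, not_lt] at hv
    omega
  have hm : H.edgeFinset.card = H.edgeSet.ncard := by
    rw [Set.ncard_eq_toFinset_card']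
    rfl
  have hsub : Cf ⊆ S' := Finset.filter_subset _ _
  have hcle : Cf.card ≤ S'.card := Finset.card_le_card hsub
  have hsdc : (S' \ Cf).card = S'.card - Cf.card := Finset.card_sdiff_of_subset hsub
  -- lower bound on degree sum
  have hsum_lb : 2 * (S'.card - Cf.card) + 3 * Cf.card ≤ ∑ v ∈ S', H.degree v := by
    rw [← Finset.sum_sdiff hsub]
    have l1 : (S' \ Cf).card * 2 ≤ ∑ v ∈ S' \ Cf, H.degree v := by
      have := Finset.card_nsmul_le_sum (S' \ Cf) (fun v => H.degree v) 2 (by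
        intro v hv
        rw [Finset.mem_sdiff, hS', Finset.mem_filter] at hv
        exact hdeg2 v hv.1.2)
      simpa [mul_comm] using this
    have l2 : Cf.card * 3 ≤ ∑ v ∈ Cf, H.degree v := by
      have := Finset.card_nsmul_le_sum Cf (fun v => H.degree v) 3 (by
        intro v hv
        rw [hCf, Finset.mem_filter] at hv
        exact hv.2)
      simpa [mul_comm] using this
    omega
  -- exact degree-sum split
  have hsplit2 : ∑ v ∈ S', H.degree v = ∑ v ∈ Cf, H.degree v + (S' \ Cf).card * 2 := by
    rw [← Finset.sum_sdiff hsub]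
    have l3 : ∑ v ∈ S' \ Cf, H.degree v = (S' \ Cf).card * 2 := by
      refine Finset.sum_const_nat ?_
      intro v hv
      rw [Finset.mem_sdiff] at hv
      have h2 := hdeg2 v (by rw [hS', Finset.mem_filter] at hv; exact hv.1.2; )
      have h3 : ¬ 3 ≤ H.degree v := fun hc => hv.2 (by rw [hCf, Finset.mem_filter]; exact ⟨hv.1, hc⟩)
      omega
    omega
  -- forest bound on H minus F
  set K : SimpleGraph V := H.deleteEdges F with hK
  have hKle : K ≤ G.deleteEdges F := by
    intro u v h
    rw [SimpleGraph.deleteEdges_adj] at h ⊢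
    exact ⟨Hg_le G h.1, h.2⟩
  have hKac : K.IsAcyclic := acyclic_mono hKle hac
  have hKend : ∀ u v, K.Adj u v → u ∈ S' := by
    intro u v h
    rw [hS', Finset.mem_filter]
    refine ⟨Finset.mem_univ _, ?_⟩
    rw [SimpleGraph.degree_pos_iff_exists_adj]
    exact ⟨v, (SimpleGraph.deleteEdges_adj.mp h).1⟩
  have hHK : H.edgeSet.ncard ≤ K.edgeSet.ncard + F.ncard := by
    have hsub2 : H.edgeSet ⊆ K.edgeSet ∪ F := by
      intro e he
      rw [hK, SimpleGraph.edgeSet_deleteEdges]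
      by_cases hf : e ∈ F
      · exact Or.inr hf
      · exact Or.inl ⟨he, hf⟩
    calc H.edgeSet.ncard ≤ (K.edgeSet ∪ F).ncard :=
          Set.ncard_le_ncard hsub2 (Set.toFinite _)
      _ ≤ K.edgeSet.ncard + F.ncard := Set.ncard_union_le _ _
  have hcorecard : {v | IsCoreVertex G v}.ncard = Cf.card := by
    rw [hcore, Set.ncard_coe_finset]
  -- path sets
  set P : Set (Set (List V)) := {s | ∃ p, IsCorePath G p ∧ s = {p, p.reverse}} with hP
  have hCPfin : {p : List V | IsCorePath G p}.Finite := by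
    apply Set.Finite.subset (List.finite_length_le V (Fintype.card V + 2))
    intro p hp
    obtain ⟨a, q, b, rfl, -, -, -, -, hnd, -, -, -⟩ := hp
    have hlen : (a :: (q ++ [b])).length = q.length + 2 := by simp
    simp only [Set.mem_setOf_eq, hlen]
    have := hnd.length_le_card
    omega
  have hPfin : P.Finite := by
    have hsub3 : P ⊆ (fun p => ({p, p.reverse} : Set (List V))) '' {p | IsCorePath G p} := by
      rintro s ⟨p, hp, rfl⟩
      exact ⟨p, hp, rfl⟩
    exact (hCPfin.image _).subset hsub3
  set Pf := hPfin.toFinset with hPf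
  set g : Set (List V) → Finset (V × V) := fun s =>
    Finset.univ.filter (fun ab => ∃ p ∈ s, firstTwo p = some ab) with hg
  set Slots : Finset (V × V) :=
    Finset.univ.filter (fun ab => 3 ≤ H.degree ab.1 ∧ H.Adj ab.1 ab.2) with hSlots
  have hmemP : ∀ s ∈ P, ∀ p ∈ s, IsCorePath G p ∧ s = {p, p.reverse} := by
    rintro s ⟨p₀, hp₀, rfl⟩ p hp
    rcases hp with rfl | hp
    · exact ⟨hp₀, rfl⟩
    · rw [Set.mem_singleton_iff] at hp
      subst hp
      refine ⟨corePath_reverse hp₀, ?_⟩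
      rw [List.reverse_reverse]
      exact Set.pair_comm _ _
  have hslotmem : ∀ (p : List V), IsCorePath G p → ∀ ab, firstTwo p = some ab → ab ∈ Slots := by
    intro p hp ab hab
    obtain ⟨a, x, t, rfl, hcore_a, haB, hxB, hadj⟩ := corePath_two hp
    simp only [firstTwo, Option.some.injEq] at hab
    subst hab
    rw [hSlots, Finset.mem_filter]
    refine ⟨Finset.mem_univ _, ?_, haB, hxB, hadj⟩
    rw [hdegnb, Hg_ncard_eq_degIn G haB]
    exact hcore_a.2
  have hgP : ∀ s ∈ P, (g s).card = 2 ∧ g s ⊆ Slots := by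
    intro s hs
    obtain ⟨p₀, hp₀, rfl⟩ := hs
    obtain ⟨a1, x1, hft1⟩ := corePath_firstTwo hp₀
    obtain ⟨a2, x2, hft2⟩ := corePath_firstTwo (corePath_reverse hp₀)
    have hne12 : (a1, x1) ≠ (a2, x2) := corePath_ft_ne hp₀ hft1 hft2
    have hgeq : g {p₀, p₀.reverse} = {(a1, x1), (a2, x2)} := by
      ext ab
      simp only [hg, Finset.mem_filter, Finset.mem_univ, true_and, Finset.mem_insert,
        Finset.mem_singleton]
      constructor
      · rintro ⟨p, hp, hft⟩
        rcases hp with rfl | hp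
        · rw [hft1] at hft
          exact Or.inl (Option.some_inj.mp hft).symm
        · rw [Set.mem_singleton_iff] at hp
          subst hp
          rw [hft2] at hft
          exact Or.inr (Option.some_inj.mp hft).symm
      · rintro (rfl | rfl)
        · exact ⟨p₀, Set.mem_insert _ _, hft1⟩
        · exact ⟨p₀.reverse, Set.mem_insert_of_mem _ rfl, hft2⟩
    constructor
    · rw [hgeq]
      exact Finset.card_pair hne12
    · rw [hgeq]
      intro ab hab
      rcases Finset.mem_insert.mp hab with rfl | hab
      · exact hslotmem p₀ hp₀ _ hft1
      · rw [Finset.mem_singleton] at hab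
        subst hab
        exact hslotmem p₀.reverse (corePath_reverse hp₀) _ hft2
  have hgdisj : ∀ s ∈ P, ∀ s' ∈ P, s ≠ s' → Disjoint (g s) (g s') := by
    intro s hs s' hs' hne'
    rw [Finset.disjoint_left]
    intro ab habs habs'
    simp only [hg, Finset.mem_filter, Finset.mem_univ, true_and] at habs habs'
    obtain ⟨p, hps, hft⟩ := habs
    obtain ⟨p', hps', hft'⟩ := habs'
    obtain ⟨hpc, hseq⟩ := hmemP s hs p hps
    obtain ⟨hpc', hseq'⟩ := hmemP s' hs' p' hps'
    have hpp' : p = p' := corePath_ft_unique hpc hpc' hft hft'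
    exact hne' (by rw [hseq, hseq', hpp'])
  -- counting the path sets
  have hbU : (Pf.biUnion g).card = ∑ s ∈ Pf, (g s).card := by
    refine Finset.card_biUnion ?_
    intro s hs s' hs' hne'
    exact hgdisj s (hPfin.mem_toFinset.mp hs) s' (hPfin.mem_toFinset.mp hs') hne'
  have hsum2 : ∑ s ∈ Pf, (g s).card = Pf.card * 2 :=
    Finset.sum_const_nat (fun s hs => (hgP s (hPfin.mem_toFinset.mp hs)).1)
  have hsubSlots : Pf.biUnion g ⊆ Slots := by
    refine Finset.biUnion_subset.mpr ?_
    intro s hs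
    exact (hgP s (hPfin.mem_toFinset.mp hs)).2
  have h2P : Pf.card * 2 ≤ Slots.card := by
    rw [← hsum2, ← hbU]
    exact Finset.card_le_card hsubSlots
  -- cardinality of the slot set
  have hSlotsCard : Slots.card = ∑ a ∈ Cf, H.degree a := by
    have hSe : Slots = Cf.biUnion (fun a => (H.neighborFinset a).image (fun x => (a, x))) := by
      ext ⟨c, d⟩
      simp only [hSlots, Finset.mem_filter, Finset.mem_univ, true_and, Finset.mem_biUnion,
        Finset.mem_image, SimpleGraph.mem_neighborFinset, hCf, hS']
      constructor
      · rintro ⟨hd3, hadj⟩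
        refine ⟨c, ?_, d, hadj, rfl⟩
        exact ⟨by omega, hd3⟩
      · rintro ⟨a, ha, x, hx, hax⟩
        rw [Prod.mk.injEq] at hax
        obtain ⟨rfl, rfl⟩ := hax
        exact ⟨ha.2, hx⟩
    rw [hSe, Finset.card_biUnion]
    · refine Finset.sum_congr rfl ?_
      intro a _
      rw [Finset.card_image_of_injective _ (fun x y h => (Prod.mk.injEq _ _ _ _ ▸ h).2)]
      rfl
    · intro a _ a' _ haa'
      rw [Function.onFun, Finset.disjoint_left]
      rintro ⟨c, d⟩ h1' h2'
      rw [Finset.mem_image] at h1' h2'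
      obtain ⟨x, -, hx⟩ := h1'
      obtain ⟨y, -, hy⟩ := h2'
      rw [Prod.mk.injEq] at hx hy
      exact haa' (hx.1.symm ▸ hy.1.symm ▸ rfl)
  have hPcard : P.ncard = Pf.card := Set.ncard_eq_toFinset_card _ hPfin
  rw [hcorecard, hPcard]
  -- final arithmetic
  rcases Finset.eq_empty_or_nonempty S' with hSe | hSne
  · have hCfe : Cf = ∅ := Finset.eq_empty_of_forall_notMem (fun v hv => by
      rw [hSe] at hsub
      exact absurd (hsub hv) (Finset.notMem_empty v))
    have hT0 : ∑ a ∈ Cf, H.degree a = 0 := by rw [hCfe]; rfl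
    have hP0 : Pf.card = 0 := by omega
    rw [hCfe, hP0]
    simp only [Finset.card_empty]
    omega
  · have hfb := forest_bound S'.card S' K rfl hKac hKend hSne
    omega

end Counting


/-- Let `G` be an undirected graph with feedback edge set
number `fen G ≥ 1`. Then the base graph of `G` has at most `2 fen G - 2` core
vertices and at most `3 fen G - 3` core paths (core paths being counted up to
reversal). -/
theorem coreVertices_and_corePaths_bound [Fintype V] (G : SimpleGraph V)
    (hfen : 1 ≤ fen G) :
    {v | IsCoreVertex G v}.ncard ≤ 2 * fen G - 2 ∧
    {s : Set (List V) | ∃ p, IsCorePath G p ∧ s = {p, p.reverse}}.ncard ≤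
      3 * fen G - 3 := by
  classical
  have hne : {k | ∃ F : Set (Sym2 V), F ⊆ G.edgeSet ∧ F.ncard = k ∧
      (G.deleteEdges F).IsAcyclic}.Nonempty := by
    refine ⟨G.edgeSet.ncard, G.edgeSet, subset_rfl, rfl, ?_⟩
    have hbot : G.deleteEdges G.edgeSet = ⊥ := by
      ext u v
      simp [SimpleGraph.deleteEdges_adj, SimpleGraph.mem_edgeSet]
    rw [hbot]
    exact SimpleGraph.isAcyclic_bot
  have hmem : fen G ∈ {k | ∃ F : Set (Sym2 V), F ⊆ G.edgeSet ∧ F.ncard = k ∧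
      (G.deleteEdges F).IsAcyclic} := Nat.sInf_mem hne
  obtain ⟨F, hF, hFcard, hac⟩ := hmem
  have h1 : 1 ≤ F.ncard := by omega
  obtain ⟨hc, hp⟩ := counts G hF hac h1
  omega


end GeoPaper
end
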